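/- Let d, d_a be natural numbers, d₊ = d + d_a, and N = 2^{d₊}. Let E₁, …, E_n be Kraus-form quantum channels on N×N complex matrices, let Û₀ be a 2^d×2^d unitary matrix, and let Û₁, …, Û_n be N×N unitary matrices. Let σ be a 2^d×2^d density matrix, let a ∈ ℂ^{2^{d_a}} be a unit vector, and let Π be an N×N matrix with 0 ≤ Π ≤ I. Define y = Tr(Π · (E_n ∘ ⋯ ∘ E₁)(σ ⊗ aaᴴ)) and ŷ = Tr(Π · (Ad_{Û_n} ∘ E_n ∘ ⋯ ∘ Ad_{Û₁} ∘ E₁)((Û₀ σ Û₀ᴴ) ⊗ aaᴴ)), where Ad_U(ρ) = U ρ Uᴴ and ⊗ is the Kronecker product. Then |y − ŷ| ≤ inf_{φ₀ ∈ ℂ, |φ₀| = 1} ‖I_{2^d} − φ₀ Û₀‖_op + Σ_{i=1}^n inf_{φ_i ∈ ℂ, |φ_i| = 1} ‖I_N − φ_i Û_i‖_op. -/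

import Mathlib

open Matrix
open scoped Kronecker ComplexOrder

set_option synthInstance.maxHeartbeats 1000000
set_option maxHeartbeats 1000000

/-- The ℓ²-operator norm (largest singular value) of a complex square matrix. -/
noncomputable def opNorm {n : ℕ} (A : Matrix (Fin n) (Fin n) ℂ) : ℝ :=
  ‖Matrix.toEuclideanCLM (𝕜 := ℂ) A‖

/-- A Kraus-form quantum channel: `Φ ρ = ∑ j, K j * ρ * (K j)ᴴ` for a finite family
of matrices with `∑ j, (K j)ᴴ * K j = 1`. -/
def IsKrausChannel {N : ℕ}
    (Φ : Matrix (Fin N) (Fin N) ℂ → Matrix (Fin N) (Fin N) ℂ) : Prop :=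
  ∃ (m : ℕ) (K : Fin m → Matrix (Fin N) (Fin N) ℂ),
    (∑ j, (K j)ᴴ * K j = 1) ∧ ∀ ρ, Φ ρ = ∑ j, K j * ρ * (K j)ᴴ

namespace QAux

variable {N : ℕ}

lemma opNorm_nonneg (A : Matrix (Fin N) (Fin N) ℂ) : 0 ≤ opNorm A := norm_nonneg _

lemma opNorm_mul_le (A B : Matrix (Fin N) (Fin N) ℂ) :
    opNorm (A * B) ≤ opNorm A * opNorm B := by
  unfold opNorm; rw [_root_.map_mul]; exact norm_mul_le _ _

lemma opNorm_conjTranspose (A : Matrix (Fin N) (Fin N) ℂ) : opNorm Aᴴ = opNorm A := by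
  unfold opNorm
  rw [show Aᴴ = star A from rfl, map_star, ContinuousLinearMap.star_eq_adjoint]
  exact LinearIsometryEquiv.norm_map ContinuousLinearMap.adjoint _

lemma inner_bound (X : Matrix (Fin N) (Fin N) ℂ) (u : Fin N → ℂ) :
    ‖(dotProduct (star u) (X *ᵥ u))‖ ≤ opNorm X * ∑ j, ‖u j‖ ^ 2 := by
  set x : EuclideanSpace ℂ (Fin N) := (WithLp.equiv 2 _).symm u with hx
  have h1 : dotProduct (star u) (X *ᵥ u)
      = inner ℂ x (Matrix.toEuclideanCLM (𝕜 := ℂ) X x) := by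
    rw [EuclideanSpace.inner_eq_star_dotProduct]
    simp [hx]
    exact dotProduct_comm _ _
  have h2 : ‖x‖ ^ 2 = ∑ j, ‖u j‖ ^ 2 := by
    rw [EuclideanSpace.norm_eq, Real.sq_sqrt (by positivity)]
    rfl
  rw [h1]
  calc ‖(inner ℂ x (Matrix.toEuclideanCLM (𝕜 := ℂ) X x) : ℂ)‖
      ≤ ‖x‖ * ‖Matrix.toEuclideanCLM (𝕜 := ℂ) X x‖ := norm_inner_le_norm _ _
    _ ≤ ‖x‖ * (opNorm X * ‖x‖) := by
        gcongr; exact ContinuousLinearMap.le_opNorm _ _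
    _ = opNorm X * ∑ j, ‖u j‖ ^ 2 := by rw [← h2]; ring

lemma dot_self (v : Fin N → ℂ) : dotProduct (star v) v = ((∑ i, ‖v i‖ ^ 2 : ℝ) : ℂ) := by
  simp only [dotProduct, Pi.star_apply, Complex.ofReal_sum]
  congr 1; funext i
  rw [show (star (v i)) * v i = (starRingEnd ℂ) (v i) * v i from rfl]
  rw [mul_comm, Complex.mul_conj']
  norm_cast

lemma opNorm_le_of_psd {A : Matrix (Fin N) (Fin N) ℂ} {c : ℝ} (hc : 0 ≤ c)
    (h : (((c : ℂ) ^ 2) • 1 - Aᴴ * A).PosSemidef) : opNorm A ≤ c := by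
  unfold opNorm
  refine ContinuousLinearMap.opNorm_le_bound _ hc fun x => ?_
  obtain ⟨u, rfl⟩ : ∃ u : Fin N → ℂ, (WithLp.equiv 2 _).symm u = x :=
    ⟨WithLp.equiv 2 _ x, rfl⟩
  have happ : (Matrix.toEuclideanCLM (𝕜 := ℂ) A) ((WithLp.equiv 2 _).symm u)
      = (WithLp.equiv 2 _).symm (A *ᵥ u) := by
    simp [Matrix.toLin'_apply]
  rw [happ]
  have hkey : dotProduct (star (A *ᵥ u)) (A *ᵥ u)
      = dotProduct (star u) ((Aᴴ * A) *ᵥ u) := by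
    rw [← Matrix.mulVec_mulVec, dotProduct_mulVec (star u), ← Matrix.star_mulVec]
  have hpos := h.dotProduct_mulVec_nonneg u
  have hsub : dotProduct (star u) ((((c : ℂ) ^ 2) • 1 - Aᴴ * A) *ᵥ u)
      = (c : ℂ) ^ 2 * dotProduct (star u) u
        - dotProduct (star u) ((Aᴴ * A) *ᵥ u) := by
    rw [Matrix.sub_mulVec, dotProduct_sub, Matrix.smul_mulVec,
      Matrix.one_mulVec, dotProduct_smul]
    simp [smul_eq_mul]
  have hnorm1 : ‖(WithLp.equiv 2 (Fin N → ℂ)).symm (A *ᵥ u)‖ ^ 2 = ∑ i, ‖(A *ᵥ u) i‖ ^ 2 := by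
    rw [EuclideanSpace.norm_eq, Real.sq_sqrt (by positivity)]; rfl
  have hnorm2 : ‖(WithLp.equiv 2 (Fin N → ℂ)).symm u‖ ^ 2 = ∑ i, ‖u i‖ ^ 2 := by
    rw [EuclideanSpace.norm_eq, Real.sq_sqrt (by positivity)]; rfl
  have hre : (∑ i, ‖(A *ᵥ u) i‖ ^ 2 : ℝ) ≤ c ^ 2 * ∑ i, ‖u i‖ ^ 2 := by
    have hge : 0 ≤ (dotProduct (star u) ((((c : ℂ) ^ 2) • 1 - Aᴴ * A) *ᵥ u)).re := by
      have := hpos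
      rw [Complex.le_def] at this
      simpa using this.1
    rw [hsub] at hge
    have e1 : (dotProduct (star u) ((Aᴴ * A) *ᵥ u)).re = ∑ i, ‖(A *ᵥ u) i‖ ^ 2 := by
      rw [← hkey, dot_self]; norm_cast
    have e2 : ((c : ℂ) ^ 2 * dotProduct (star u) u).re = c ^ 2 * ∑ i, ‖u i‖ ^ 2 := by
      rw [dot_self]; norm_cast
    rw [Complex.sub_re, e1, e2] at hge
    linarith
  have hfin : ‖(WithLp.equiv 2 (Fin N → ℂ)).symm (A *ᵥ u)‖ ^ 2
      ≤ (c * ‖(WithLp.equiv 2 (Fin N → ℂ)).symm u‖) ^ 2 := by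
    rw [hnorm1, mul_pow, hnorm2]; exact hre
  exact (pow_le_pow_iff_left₀ (norm_nonneg _)
    (mul_nonneg hc (norm_nonneg _)) two_ne_zero).mp hfin

open scoped MatrixOrder

lemma abs_trace_mul_le {X ρ : Matrix (Fin N) (Fin N) ℂ} (hρ : ρ.PosSemidef)
    (ht : ρ.trace = 1) : ‖((X * ρ).trace)‖ ≤ opNorm X := by
  have hex : ∃ C : Matrix (Fin N) (Fin N) ℂ, ρ = Cᴴ * C :=
    ⟨CFC.sqrt ρ, by rw [(CFC.sqrt_nonneg ρ).posSemidef.1.eq, CFC.sqrt_mul_sqrt_self ρ hρ.nonneg]⟩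
  obtain ⟨C, rfl⟩ := hex
  have h1 : (X * (Cᴴ * C)).trace = (C * (X * Cᴴ)).trace := by
    rw [← Matrix.mul_assoc, Matrix.trace_mul_comm]
  have h2 : ∀ i, (C * (X * Cᴴ)) i i
      = dotProduct (star (star (C i))) (X *ᵥ (star (C i))) := by
    intro i
    simp only [Matrix.mul_apply, dotProduct, Matrix.mulVec, star_star,
      Matrix.conjTranspose_apply, Pi.star_apply, dotProduct]
  have htr : ‖((X * (Cᴴ * C)).trace)‖
      ≤ ∑ i, (opNorm X * ∑ j, ‖star (C i j)‖ ^ 2) := by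
    rw [h1, Matrix.trace]
    refine le_trans (norm_sum_le _ _) (Finset.sum_le_sum fun i _ => ?_)
    rw [Matrix.diag_apply, h2 i]
    simpa using inner_bound X (star (C i))
  have hsum : ∑ i, ∑ j, ‖star (C i j)‖ ^ 2 = 1 := by
    have h3 : (Cᴴ * C).trace = ((∑ i, ∑ j, ‖star (C i j)‖ ^ 2 : ℝ) : ℂ) := by
      rw [Matrix.trace]
      push_cast
      rw [Finset.sum_comm]
      congr 1; funext j
      simp only [Matrix.diag_apply, Matrix.mul_apply, Matrix.conjTranspose_apply]
      congr 1; funext i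
      rw [show (star (C i j)) * C i j = (starRingEnd ℂ) (C i j) * C i j from rfl,
        mul_comm, Complex.mul_conj']
      norm_cast
      simp
    rw [ht] at h3
    exact_mod_cast h3.symm
  calc ‖((X * (Cᴴ * C)).trace)‖
      ≤ ∑ i, (opNorm X * ∑ j, ‖star (C i j)‖ ^ 2) := htr
    _ = opNorm X * ∑ i, ∑ j, ‖star (C i j)‖ ^ 2 := by rw [← Finset.mul_sum]
    _ = opNorm X := by rw [hsum, mul_one]

lemma key_step {M ρ V : Matrix (Fin N) (Fin N) ℂ} (hρ : ρ.PosSemidef) (ht : ρ.trace = 1)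
    (hM : M.PosSemidef) (hM1 : (1 - M).PosSemidef)
    (hV : V ∈ Matrix.unitaryGroup (Fin N) ℂ) (φ : ℂ) (hφ : ‖φ‖ = 1) :
    ‖((M * ρ).trace - (M * (V * ρ * Vᴴ)).trace)‖ ≤ opNorm (1 - φ • V) := by
  have hφφ : (starRingEnd ℂ) φ * φ = 1 := by
    rw [mul_comm, Complex.mul_conj']
    norm_cast
    rw [hφ]; norm_num
  have hVV : Vᴴ * V = 1 := by
    have := Matrix.mem_unitaryGroup_iff'.mp hV
    simpa [Matrix.star_eq_conjTranspose] using this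
  have hVV' : V * Vᴴ = 1 := by
    have := Matrix.mem_unitaryGroup_iff.mp hV
    simpa [Matrix.star_eq_conjTranspose] using this
  set W : Matrix (Fin N) (Fin N) ℂ := φ • V with hW
  have hWc : Wᴴ = (starRingEnd ℂ) φ • Vᴴ := by
    rw [hW, Matrix.conjTranspose_smul]
    rfl
  have hWW : Wᴴ * W = 1 := by
    rw [hWc, hW, Matrix.smul_mul, Matrix.mul_smul, smul_smul, hφφ, one_smul, hVV]
  have hconj : V * ρ * Vᴴ = W * ρ * Wᴴ := by
    rw [hW, hWc, Matrix.smul_mul, Matrix.smul_mul, Matrix.mul_smul, smul_smul,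
      mul_comm φ _, hφφ, one_smul]
  -- the shifted observable
  set A : Matrix (Fin N) (Fin N) ℂ := M - (2⁻¹ : ℂ) • 1 with hA
  have hAH : Aᴴ = A := by
    rw [hA, Matrix.conjTranspose_sub, hM.1, Matrix.conjTranspose_smul,
      Matrix.conjTranspose_one]
    norm_num
  have hAnorm : opNorm A ≤ 2⁻¹ := by
    refine opNorm_le_of_psd (by norm_num) ?_
    have hsq : ((((2⁻¹ : ℝ) : ℂ) ^ 2) • 1 - Aᴴ * A) = M - M * M := by
      rw [hAH, hA]
      simp only [sub_mul, mul_sub, smul_mul_assoc, Matrix.mul_smul, one_mul, mul_one,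
        smul_smul]
      push_cast
      module
    rw [hsq]
    have hS := (CFC.sqrt_nonneg M).posSemidef
    have hSS := CFC.sqrt_mul_sqrt_self M hM.nonneg
    have hSMS : M * M = (CFC.sqrt M) * M * (CFC.sqrt M) := by
      conv_lhs => rw [← hSS]
      rw [Matrix.mul_assoc (CFC.sqrt M) (CFC.sqrt M) _, ← Matrix.mul_assoc (CFC.sqrt M) (CFC.sqrt M) (CFC.sqrt M),
        hSS, ← Matrix.mul_assoc]
    have h2 : M - M * M = (CFC.sqrt M) * (1 - M) * (CFC.sqrt M)ᴴ := by
      rw [hS.1, mul_sub, mul_one, sub_mul, hSS, hSMS]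
    rw [h2]
    exact hM1.mul_mul_conjTranspose_same _
  -- rewrite the difference
  have htr2 : (M * (W * ρ * Wᴴ)).trace = ((Wᴴ * M * W) * ρ).trace := by
    rw [show M * (W * ρ * Wᴴ) = (M * W * ρ) * Wᴴ by noncomm_ring,
      Matrix.trace_mul_comm]
    noncomm_ring
  have hdiff : (M * ρ).trace - (M * (V * ρ * Vᴴ)).trace
      = ((A * (1 - W)) * ρ).trace + (((1 - Wᴴ) * A * W) * ρ).trace := by
    rw [hconj, htr2, ← Matrix.trace_add, ← Matrix.trace_sub, ← Matrix.add_mul,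
      ← Matrix.sub_mul]
    congr 1
    have : M - Wᴴ * M * W = A * (1 - W) + (1 - Wᴴ) * A * W := by
      rw [hA]
      have expand : (M - (2⁻¹ : ℂ) • 1) * (1 - W) + (1 - Wᴴ) * (M - (2⁻¹ : ℂ) • 1) * W
          = M - Wᴴ * M * W + (2⁻¹ : ℂ) • (Wᴴ * W - 1) := by
        simp only [sub_mul, mul_sub, smul_mul_assoc, Matrix.mul_smul, one_mul, mul_one,
          Matrix.smul_mul, smul_sub]
        module
      rw [expand, hWW]
      simp
    rw [this]
  rw [hdiff]
  have hb1 : ‖(((A * (1 - W)) * ρ).trace)‖ ≤ 2⁻¹ * opNorm (1 - W) := by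
    refine le_trans (abs_trace_mul_le hρ ht) (le_trans (opNorm_mul_le _ _) ?_)
    have := opNorm_nonneg (1 - W)
    nlinarith [hAnorm, opNorm_nonneg A]
  have hWnorm : opNorm W ≤ 1 := by
    refine opNorm_le_of_psd (by norm_num) ?_
    rw [hWW]
    norm_num
    exact Matrix.PosSemidef.zero
  have hCT : opNorm (1 - Wᴴ) = opNorm (1 - W) := by
    rw [show (1 : Matrix (Fin N) (Fin N) ℂ) - Wᴴ = (1 - W)ᴴ by
      rw [Matrix.conjTranspose_sub, Matrix.conjTranspose_one]]
    exact opNorm_conjTranspose _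
  have hb2 : ‖((((1 - Wᴴ) * A * W) * ρ).trace)‖ ≤ 2⁻¹ * opNorm (1 - W) := by
    refine le_trans (abs_trace_mul_le hρ ht) ?_
    calc opNorm ((1 - Wᴴ) * A * W) ≤ opNorm ((1 - Wᴴ) * A) * opNorm W := opNorm_mul_le _ _
      _ ≤ opNorm (1 - Wᴴ) * opNorm A * opNorm W := by
          have := opNorm_mul_le (1 - Wᴴ) A
          nlinarith [opNorm_nonneg W]
      _ ≤ 2⁻¹ * opNorm (1 - W) := by
          rw [hCT]
          have h1 : opNorm A * opNorm W ≤ 2⁻¹ * 1 :=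
            mul_le_mul hAnorm hWnorm (opNorm_nonneg _) (by norm_num)
          calc opNorm (1 - W) * opNorm A * opNorm W
              = opNorm (1 - W) * (opNorm A * opNorm W) := by ring
            _ ≤ opNorm (1 - W) * (2⁻¹ * 1) :=
                mul_le_mul_of_nonneg_left h1 (opNorm_nonneg _)
            _ = 2⁻¹ * opNorm (1 - W) := by ring
  calc ‖(((A * (1 - W)) * ρ).trace + (((1 - Wᴴ) * A * W) * ρ).trace)‖
      ≤ ‖(((A * (1 - W)) * ρ).trace)‖
        + ‖((((1 - Wᴴ) * A * W) * ρ).trace)‖ := norm_add_le _ _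
    _ ≤ 2⁻¹ * opNorm (1 - W) + 2⁻¹ * opNorm (1 - W) := add_le_add hb1 hb2
    _ = opNorm (1 - φ • V) := by rw [hW]; ring

lemma psd_sum {m : ℕ} {f : Fin m → Matrix (Fin N) (Fin N) ℂ}
    (h : ∀ j, (f j).PosSemidef) : (∑ j, f j).PosSemidef := by
  classical
  induction (Finset.univ : Finset (Fin m)) using Finset.induction with
  | empty => simpa using Matrix.PosSemidef.zero
  | insert a s hx ih => rw [Finset.sum_insert hx]; exact (h _).add ih

/-- A step `g` is *good* if it preserves density matrices and admits a dual
preserving effects. -/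
def GoodStep (g : Matrix (Fin N) (Fin N) ℂ → Matrix (Fin N) (Fin N) ℂ) : Prop :=
  (∀ ρ, ρ.PosSemidef → ρ.trace = 1 → (g ρ).PosSemidef ∧ (g ρ).trace = 1) ∧
  (∀ M : Matrix (Fin N) (Fin N) ℂ, M.PosSemidef → (1 - M).PosSemidef →
    ∃ M', M'.PosSemidef ∧ (1 - M').PosSemidef ∧ ∀ τ, (M * g τ).trace = (M' * τ).trace)

lemma goodStep_channel {Φ} (hΦ : IsKrausChannel (N := N) Φ) : GoodStep Φ := by
  obtain ⟨m, K, hK1, hKr⟩ := hΦ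
  constructor
  · intro ρ hρ ht
    constructor
    · rw [hKr]; exact psd_sum fun j => hρ.mul_mul_conjTranspose_same _
    · rw [hKr, Matrix.trace_sum]
      have : ∀ j : Fin m, (K j * ρ * (K j)ᴴ).trace = ((K j)ᴴ * K j * ρ).trace := by
        intro j; rw [Matrix.trace_mul_cycle]
      rw [Finset.sum_congr rfl fun j _ => this j]
      rw [← Matrix.trace_sum, ← Finset.sum_mul, hK1, one_mul, ht]
  · intro M hM hM1
    refine ⟨∑ j, (K j)ᴴ * M * K j, psd_sum fun j => hM.conjTranspose_mul_mul_same _,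
      ?_, ?_⟩
    · have h1 : (1 : Matrix (Fin N) (Fin N) ℂ) - ∑ j, (K j)ᴴ * M * K j
          = ∑ j, (K j)ᴴ * (1 - M) * K j := by
        have e1 : ∀ j : Fin m, (K j)ᴴ * (1 - M) * K j
            = (K j)ᴴ * K j - (K j)ᴴ * M * K j := by
          intro j; rw [mul_sub, mul_one, sub_mul]
        rw [Finset.sum_congr rfl fun j _ => e1 j, Finset.sum_sub_distrib, hK1]
      rw [h1]
      exact psd_sum fun j => hM1.conjTranspose_mul_mul_same _
    · intro τ
      rw [hKr, Finset.mul_sum, Matrix.trace_sum, Finset.sum_mul, Matrix.trace_sum]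
      congr 1; funext j
      rw [show M * (K j * τ * (K j)ᴴ) = (M * K j * τ) * (K j)ᴴ by noncomm_ring,
        Matrix.trace_mul_comm, show (K j)ᴴ * (M * K j * τ) = ((K j)ᴴ * M * K j) * τ by
          noncomm_ring]

lemma goodStep_unitary {V : Matrix (Fin N) (Fin N) ℂ}
    (hV : V ∈ Matrix.unitaryGroup (Fin N) ℂ) :
    GoodStep (fun ρ => V * ρ * Vᴴ) := by
  have hVV : Vᴴ * V = 1 := by
    have := Matrix.mem_unitaryGroup_iff'.mp hV
    simpa [Matrix.star_eq_conjTranspose] using this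
  constructor
  · intro ρ hρ ht
    refine ⟨hρ.mul_mul_conjTranspose_same _, ?_⟩
    rw [Matrix.trace_mul_cycle, hVV, one_mul, ht]
  · intro M hM hM1
    refine ⟨Vᴴ * M * V, hM.conjTranspose_mul_mul_same _, ?_, ?_⟩
    · have h1 : (1 : Matrix (Fin N) (Fin N) ℂ) - Vᴴ * M * V = Vᴴ * (1 - M) * V := by
        rw [mul_sub, mul_one, sub_mul, hVV]
      rw [h1]
      exact hM1.conjTranspose_mul_mul_same _
    · intro τ
      rw [show M * (V * τ * Vᴴ) = (M * V * τ) * Vᴴ by noncomm_ring,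
        Matrix.trace_mul_comm, show Vᴴ * (M * V * τ) = (Vᴴ * M * V) * τ by noncomm_ring]

lemma goodStep_comp {g h} (hg : GoodStep (N := N) g) (hh : GoodStep h) :
    GoodStep (h ∘ g) := by
  constructor
  · intro ρ hρ ht
    obtain ⟨h1, h2⟩ := hg.1 ρ hρ ht
    exact hh.1 _ h1 h2
  · intro M hM hM1
    obtain ⟨M', hM', hM1', htr⟩ := hh.2 M hM hM1
    obtain ⟨M'', hM'', hM1'', htr'⟩ := hg.2 M' hM' hM1'
    exact ⟨M'', hM'', hM1'', fun τ => (htr _).trans (htr' _)⟩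

lemma goodStep_fold {n : ℕ} (g : Fin n → Matrix (Fin N) (Fin N) ℂ → Matrix (Fin N) (Fin N) ℂ)
    (hg : ∀ i, GoodStep (g i)) (l : List (Fin n)) :
    GoodStep (fun ρ => l.foldl (fun ρ i => g i ρ) ρ) := by
  induction l with
  | nil => exact ⟨fun ρ hρ ht => ⟨hρ, ht⟩, fun M hM hM1 => ⟨M, hM, hM1, fun _ => rfl⟩⟩
  | cons i l ih =>
    have := goodStep_comp (hg i) ih
    simpa [Function.comp_def] using this

instance : Nonempty {z : ℂ // ‖z‖ = 1} := ⟨⟨1, norm_one⟩⟩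

lemma hybrid {n : ℕ}
    (E : Fin n → Matrix (Fin N) (Fin N) ℂ → Matrix (Fin N) (Fin N) ℂ)
    (hE : ∀ i, IsKrausChannel (E i))
    (U : Fin n → Matrix (Fin N) (Fin N) ℂ)
    (hU : ∀ i, U i ∈ Matrix.unitaryGroup (Fin N) ℂ)
    (l : List (Fin n)) :
    ∀ (ρ : Matrix (Fin N) (Fin N) ℂ), ρ.PosSemidef → ρ.trace = 1 →
    ∀ (M : Matrix (Fin N) (Fin N) ℂ), M.PosSemidef → (1 - M).PosSemidef →
    ‖((M * l.foldl (fun ρ i => E i ρ) ρ).trace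
      - (M * l.foldl (fun ρ i => U i * E i ρ * (U i)ᴴ) ρ).trace)‖
    ≤ (l.map (fun i => ⨅ φ : {z : ℂ // ‖z‖ = 1}, opNorm (1 - (φ : ℂ) • U i))).sum := by
  induction l with
  | nil => intro ρ hρ ht M hM hM1; simp
  | cons i l ih =>
    intro ρ hρ ht M hM hM1
    have hρ' := (goodStep_channel (hE i)).1 ρ hρ ht
    have hAgood : GoodStep (fun τ =>
        l.foldl (fun ρ j => U j * E j ρ * (U j)ᴴ) τ) := by
      refine goodStep_fold _ (fun j => ?_) l
      have := goodStep_comp (goodStep_channel (hE j)) (goodStep_unitary (hU j))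
      simpa [Function.comp_def] using this
    obtain ⟨M', hM', hM1', htr⟩ := hAgood.2 M hM hM1
    have step1 := ih (E i ρ) hρ'.1 hρ'.2 M hM hM1
    have step2 : ‖((M * l.foldl (fun ρ j => U j * E j ρ * (U j)ᴴ) (E i ρ)).trace
          - (M * l.foldl (fun ρ j => U j * E j ρ * (U j)ᴴ)
              (U i * E i ρ * (U i)ᴴ)).trace)‖
        ≤ ⨅ φ : {z : ℂ // ‖z‖ = 1}, opNorm (1 - (φ : ℂ) • U i) := by
      rw [htr (E i ρ), htr (U i * E i ρ * (U i)ᴴ)]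
      exact le_ciInf fun φ => key_step hρ'.1 hρ'.2 hM' hM1' (hU i) φ φ.2
    simp only [List.foldl_cons, List.map_cons, List.sum_cons]
    calc ‖((M * l.foldl (fun ρ j => E j ρ) (E i ρ)).trace
          - (M * l.foldl (fun ρ j => U j * E j ρ * (U j)ᴴ)
              (U i * E i ρ * (U i)ᴴ)).trace)‖
        ≤ ‖((M * l.foldl (fun ρ j => E j ρ) (E i ρ)).trace
            - (M * l.foldl (fun ρ j => U j * E j ρ * (U j)ᴴ) (E i ρ)).trace)‖
          + ‖((M * l.foldl (fun ρ j => U j * E j ρ * (U j)ᴴ) (E i ρ)).trace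
            - (M * l.foldl (fun ρ j => U j * E j ρ * (U j)ᴴ)
                (U i * E i ρ * (U i)ᴴ)).trace)‖ := by
          exact norm_sub_le_norm_sub_add_norm_sub _ _ _
      _ ≤ _ := by
          have := add_le_add step1 step2
          linarith

end QAux

open QAux

/-- Theorem 1: the shift in predictive confidence caused by inserting adversarial
unitary gates within the intermediate layers of a quantum classifier is bounded by
the sum of the phase-optimized operator-norm distances of the gates to the identity. -/
theorem confidence_shift_opNorm_bound (d da n : ℕ)
    (E : Fin n → Matrix (Fin (2 ^ (d + da))) (Fin (2 ^ (d + da))) ℂ →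
      Matrix (Fin (2 ^ (d + da))) (Fin (2 ^ (d + da))) ℂ)
    (hE : ∀ i, IsKrausChannel (E i))
    (U0 : Matrix (Fin (2 ^ d)) (Fin (2 ^ d)) ℂ)
    (hU0 : U0 ∈ Matrix.unitaryGroup (Fin (2 ^ d)) ℂ)
    (U : Fin n → Matrix (Fin (2 ^ (d + da))) (Fin (2 ^ (d + da))) ℂ)
    (hU : ∀ i, U i ∈ Matrix.unitaryGroup (Fin (2 ^ (d + da))) ℂ)
    (σ : Matrix (Fin (2 ^ d)) (Fin (2 ^ d)) ℂ)
    (hσ : σ.PosSemidef ∧ σ.trace = 1)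
    (a : Fin (2 ^ da) → ℂ) (ha : ∑ i, ‖a i‖ ^ 2 = 1)
    (Pk : Matrix (Fin (2 ^ (d + da))) (Fin (2 ^ (d + da))) ℂ)
    (hPk : Pk.PosSemidef ∧ (1 - Pk).PosSemidef)
    -- the Kronecker-product embedding `ρ ⊗ aaᴴ`, reindexed to live on `Fin (2 ^ (d + da))`
    (emb : Matrix (Fin (2 ^ d)) (Fin (2 ^ d)) ℂ →
      Matrix (Fin (2 ^ (d + da))) (Fin (2 ^ (d + da))) ℂ)
    (hemb : ∀ ρ, emb ρ =
      Matrix.reindex (finProdFinEquiv.trans (finCongr (pow_add 2 d da).symm))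
        (finProdFinEquiv.trans (finCongr (pow_add 2 d da).symm))
        (ρ ⊗ₖ Matrix.vecMulVec a (star a)))
    -- y : predictive confidence of the unattacked classifier
    (y : ℂ) (hy : y = Matrix.trace (Pk *
      (List.ofFn E).foldl (fun ρ Φ => Φ ρ) (emb σ)))
    -- ŷ : predictive confidence of the attacked classifier
    (yhat : ℂ) (hyhat : yhat = Matrix.trace (Pk *
      (List.ofFn (fun i => fun ρ => U i * E i ρ * (U i)ᴴ)).foldl (fun ρ Φ => Φ ρ)
        (emb (U0 * σ * U0ᴴ)))) :
    ‖(y - yhat)‖ ≤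
      (⨅ φ : {z : ℂ // ‖z‖ = 1}, opNorm (1 - (φ : ℂ) • U0)) +
        ∑ i, ⨅ φ : {z : ℂ // ‖z‖ = 1}, opNorm (1 - (φ : ℂ) • U i) := by
  set e : Fin (2 ^ d) × Fin (2 ^ da) ≃ Fin (2 ^ (d + da)) :=
    finProdFinEquiv.trans (finCongr (pow_add 2 d da).symm) with he
  -- the isometry embedding matrix
  set B : Matrix (Fin (2 ^ (d + da))) (Fin (2 ^ d)) ℂ :=
    fun p i => if (e.symm p).1 = i then a (e.symm p).2 else 0 with hB
  have hembB : ∀ τ, emb τ = B * τ * Bᴴ := by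
    intro τ
    rw [hemb]
    ext p q
    simp only [Matrix.mul_apply, Matrix.conjTranspose_apply]
    simp only [Matrix.reindex_apply, Matrix.submatrix_apply, Matrix.kroneckerMap_apply,
      Matrix.vecMulVec_apply, Matrix.mul_apply, Matrix.conjTranspose_apply, hB,
      Pi.star_apply]
    simp only [ite_mul, zero_mul, mul_ite, mul_zero, apply_ite (star : ℂ → ℂ),
      star_zero, Finset.sum_ite_eq, Finset.sum_ite_eq', Finset.mem_univ, if_true]
    ring
  have hs : ∑ k, star (a k) * a k = (1 : ℂ) := by
    have h0 := dot_self a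
    simp only [dotProduct, Pi.star_apply] at h0
    rw [h0, ha]
    norm_cast
  have hBB : Bᴴ * B = 1 := by
    ext i j
    simp only [Matrix.mul_apply, Matrix.conjTranspose_apply, Matrix.one_apply]
    rw [← Equiv.sum_comp e]
    simp only [hB, Equiv.symm_apply_apply]
    rw [Fintype.sum_prod_type, Finset.sum_comm]
    simp only [apply_ite (star : ℂ → ℂ), star_zero, ite_mul, zero_mul, mul_ite,
      mul_zero, Finset.sum_ite_eq', Finset.mem_univ, if_true]
    rcases eq_or_ne i j with rfl | hij
    · simp only [if_pos rfl]
      exact hs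
    · rw [if_neg hij]
      simp only [hij.symm, if_false]
      simp
  -- emb preserves density matrices
  have hembDensity : ∀ τ : Matrix (Fin (2 ^ d)) (Fin (2 ^ d)) ℂ,
      τ.PosSemidef → τ.trace = 1 → (emb τ).PosSemidef ∧ (emb τ).trace = 1 := by
    intro τ hτ ht
    rw [hembB]
    refine ⟨hτ.mul_mul_conjTranspose_same _, ?_⟩
    rw [Matrix.trace_mul_cycle, hBB, one_mul, ht]
  -- the initial attacked state is a density matrix
  have hU0V : U0ᴴ * U0 = 1 := by
    have := Matrix.mem_unitaryGroup_iff'.mp hU0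
    simpa [Matrix.star_eq_conjTranspose] using this
  have hσ' : (U0 * σ * U0ᴴ).PosSemidef ∧ (U0 * σ * U0ᴴ).trace = 1 := by
    refine ⟨hσ.1.mul_mul_conjTranspose_same _, ?_⟩
    rw [Matrix.trace_mul_cycle, hU0V, one_mul, hσ.2]
  -- rewrite the folds over `List.finRange`
  have hfold1 : ∀ x, (List.ofFn E).foldl (fun ρ Φ => Φ ρ) x
      = (List.finRange n).foldl (fun ρ i => E i ρ) x := by
    intro x
    rw [List.ofFn_eq_map, List.foldl_map]
  have hfold2 : ∀ x, (List.ofFn (fun i => fun ρ => U i * E i ρ * (U i)ᴴ)).foldl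
        (fun ρ Φ => Φ ρ) x
      = (List.finRange n).foldl (fun ρ i => U i * E i ρ * (U i)ᴴ) x := by
    intro x
    rw [List.ofFn_eq_map, List.foldl_map]
  set l : List (Fin n) := List.finRange n
  set ymid : ℂ :=
    (Pk * l.foldl (fun ρ i => E i ρ) (emb (U0 * σ * U0ᴴ))).trace with hymid
  -- bound the attack on the data-encoding gate U0
  have hbound0 : ‖(y - ymid)‖
      ≤ ⨅ φ : {z : ℂ // ‖z‖ = 1}, opNorm (1 - (φ : ℂ) • U0) := by
    have hgood : GoodStep (fun ρ => l.foldl (fun ρ i => E i ρ) ρ) :=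
      goodStep_fold _ (fun i => goodStep_channel (hE i)) l
    obtain ⟨M', hM', hM1', htr⟩ := hgood.2 Pk hPk.1 hPk.2
    have htrR : ∀ τ, (Pk * l.foldl (fun ρ i => E i ρ) (emb τ)).trace
        = ((Bᴴ * M' * B) * τ).trace := by
      intro τ
      rw [htr (emb τ), hembB]
      rw [show M' * (B * τ * Bᴴ) = (M' * B * τ) * Bᴴ by
          rw [← Matrix.mul_assoc, ← Matrix.mul_assoc],
        Matrix.trace_mul_comm, show Bᴴ * (M' * B * τ) = (Bᴴ * M' * B) * τ by
          rw [← Matrix.mul_assoc, ← Matrix.mul_assoc]]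
    have hR : (Bᴴ * M' * B).PosSemidef := hM'.conjTranspose_mul_mul_same _
    have hR1 : (1 - Bᴴ * M' * B).PosSemidef := by
      have h1 : (1 : Matrix (Fin (2 ^ d)) (Fin (2 ^ d)) ℂ) - Bᴴ * M' * B
          = Bᴴ * (1 - M') * B := by
        rw [Matrix.mul_sub, Matrix.mul_one, Matrix.sub_mul, hBB]
      rw [h1]
      exact hM1'.conjTranspose_mul_mul_same _
    have hy' : y = ((Bᴴ * M' * B) * σ).trace := by
      rw [hy, hfold1, htrR]
    have hymid' : ymid = ((Bᴴ * M' * B) * (U0 * σ * U0ᴴ)).trace := by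
      rw [hymid, htrR]
    rw [hy', hymid']
    exact le_ciInf fun φ => key_step hσ.1 hσ.2 hR hR1 hU0 φ φ.2
  -- bound the attacks on the intermediate layers
  have hbound1 : ‖(ymid - yhat)‖
      ≤ ∑ i, ⨅ φ : {z : ℂ // ‖z‖ = 1}, opNorm (1 - (φ : ℂ) • U i) := by
    have := hybrid E hE U hU l (emb (U0 * σ * U0ᴴ))
      (hembDensity _ hσ'.1 hσ'.2).1 (hembDensity _ hσ'.1 hσ'.2).2 Pk hPk.1 hPk.2
    rw [hyhat, hfold2, hymid]
    refine le_trans this (le_of_eq ?_)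
    rw [show l.map (fun i => ⨅ φ : {z : ℂ // ‖z‖ = 1}, opNorm (1 - (φ : ℂ) • U i))
        = List.ofFn (fun i => ⨅ φ : {z : ℂ // ‖z‖ = 1}, opNorm (1 - (φ : ℂ) • U i))
        from (List.ofFn_eq_map).symm, List.sum_ofFn]
  calc ‖(y - yhat)‖
      ≤ ‖(y - ymid)‖ + ‖(ymid - yhat)‖ :=
        norm_sub_le_norm_sub_add_norm_sub _ _ _
    _ ≤ _ := add_le_add hbound0 hbound1
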